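/- Let x_R, x_H, v_R ∈ ℝ with x_H ≠ x_R, let a_max > 0, and suppose sign(v_R·(x_H − x_R)) · v_R²/(2·a_max) < |x_H − x_R|, where sign(s) is 1 for s > 0, 0 for s = 0 and −1 for s < 0. Then there exist T ≥ 0 and a twice-differentiable function x : ℝ → ℝ such that x(0) = x_R, x′(0) = v_R, x′(T) = 0, |x″(t)| ≤ a_max for all t ∈ [0, T], and x(t) ≠ x_H for all t ∈ [0, T]; i.e., a braking maneuver with acceleration bounded by a_max exists that brings the vehicle to rest without ever reaching x_H. -/

import Mathlib

/-- Auxiliary: braking maneuver for positive initial velocity. -/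
lemma braking_aux (x_R x_H v_R a_max : ℝ)
    (ha : 0 < a_max) (hv : 0 < v_R)
    (hsafe : x_H < x_R ∨ x_R + v_R ^ 2 / (2 * a_max) < x_H) :
    ∃ (T : ℝ) (x : ℝ → ℝ), 0 ≤ T ∧
      Differentiable ℝ x ∧ Differentiable ℝ (deriv x) ∧
      x 0 = x_R ∧ deriv x 0 = v_R ∧ deriv x T = 0 ∧
      (∀ t ∈ Set.Icc 0 T, |deriv (deriv x) t| ≤ a_max) ∧
      ∀ t ∈ Set.Icc 0 T, x t ≠ x_H := by
  refine ⟨v_R / a_max, fun t => x_R + v_R * t - a_max * t ^ 2 / 2, ?_, ?_⟩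
  · positivity
  have hx : ∀ t : ℝ, HasDerivAt (fun t => x_R + v_R * t - a_max * t ^ 2 / 2)
      (v_R - a_max * t) t := by
    intro t
    have h1 : HasDerivAt (fun t : ℝ => x_R + v_R * t - a_max * t ^ 2 / 2)
        (0 + v_R * 1 - a_max * (2 * t ^ 1) / 2) t := by
      exact ((hasDerivAt_const t x_R).add ((hasDerivAt_id t).const_mul v_R)).sub
        (((hasDerivAt_pow 2 t).const_mul a_max).div_const 2)
    convert h1 using 1; ring
  have hd1 : deriv (fun t => x_R + v_R * t - a_max * t ^ 2 / 2)
      = fun t => v_R - a_max * t := funext fun t => (hx t).deriv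
  have hv' : ∀ t : ℝ, HasDerivAt (fun t : ℝ => v_R - a_max * t) (-a_max) t := by
    intro t
    have h1 : HasDerivAt (fun t : ℝ => v_R - a_max * t) (0 - a_max * 1) t :=
      (hasDerivAt_const t v_R).sub ((hasDerivAt_id t).const_mul a_max)
    convert h1 using 1; ring
  have hd2 : deriv (fun t : ℝ => v_R - a_max * t) = fun _ => -a_max :=
    funext fun t => (hv' t).deriv
  refine ⟨fun t => (hx t).differentiableAt, ?_, by ring, ?_, ?_, ?_, ?_⟩
  · rw [hd1]; exact fun t => (hv' t).differentiableAt
  · rw [hd1]; simp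
  · rw [hd1]; field_simp; ring
  · intro t _
    rw [hd1, hd2]
    simp [abs_of_pos ha, ha.le]
  · rintro t ⟨ht0, ht1⟩
    have htv : a_max * t ≤ v_R := by
      rw [le_div_iff₀ ha] at ht1; linarith
    have hlow : 0 ≤ v_R * t - a_max * t ^ 2 / 2 := by nlinarith
    have hhigh : v_R * t - a_max * t ^ 2 / 2 ≤ v_R ^ 2 / (2 * a_max) := by
      rw [le_div_iff₀ (by positivity)]
      nlinarith [sq_nonneg (v_R - a_max * t)]
    rcases hsafe with h | h
    · intro hc; nlinarith
    · intro hc; nlinarith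

/-- If sign(v_R (x_H − x_R)) · v_R²/(2 a_max) < |x_H − x_R|, then there exists
a braking maneuver with acceleration bounded by a_max that brings the vehicle
from (x_R, v_R) to rest without ever reaching x_H. -/
theorem braking_maneuver_exists (x_R x_H v_R a_max : ℝ)
    (hne : x_H ≠ x_R) (ha : 0 < a_max)
    (hstop : Real.sign (v_R * (x_H - x_R)) * (v_R ^ 2 / (2 * a_max))
        < |x_H - x_R|) :
    ∃ (T : ℝ) (x : ℝ → ℝ), 0 ≤ T ∧
      Differentiable ℝ x ∧ Differentiable ℝ (deriv x) ∧
      x 0 = x_R ∧ deriv x 0 = v_R ∧ deriv x T = 0 ∧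
      (∀ t ∈ Set.Icc 0 T, |deriv (deriv x) t| ≤ a_max) ∧
      ∀ t ∈ Set.Icc 0 T, x t ≠ x_H := by
  rcases lt_trichotomy v_R 0 with hv | hv | hv
  · -- negative velocity: apply aux to the mirrored problem
    have hsafe : -x_H < -x_R ∨ -x_R + (-v_R) ^ 2 / (2 * a_max) < -x_H := by
      rcases lt_or_gt_of_ne hne with h | h
      · -- x_H < x_R : product positive, sign = 1
        right
        have hprod : 0 < v_R * (x_H - x_R) := by nlinarith
        rw [Real.sign_of_pos hprod] at hstop
        rw [abs_of_neg (by linarith : x_H - x_R < 0)] at hstop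
        have e : (-v_R) ^ 2 = v_R ^ 2 := by ring
        rw [e]; linarith
      · left; linarith
    obtain ⟨T, y, hT, hdy, hddy, h0, hv0, hvT, hacc, hney⟩ :=
      braking_aux (-x_R) (-x_H) (-v_R) a_max ha (by linarith) hsafe
    refine ⟨T, fun t => -(y t), hT, hdy.neg, ?_, by simp [h0], ?_, ?_, ?_, ?_⟩
    · have : deriv (fun t => -(y t)) = fun t => -(deriv y t) :=
        funext fun t => deriv.neg
      rw [this]; exact hddy.neg
    · have : deriv (fun t => -(y t)) = fun t => -(deriv y t) :=
        funext fun t => deriv.neg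
      rw [this]; simp [hv0]
    · have : deriv (fun t => -(y t)) = fun t => -(deriv y t) :=
        funext fun t => deriv.neg
      rw [this]; simp [hvT]
    · intro t ht
      have h1 : deriv (fun t => -(y t)) = fun t => -(deriv y t) :=
        funext fun t => deriv.neg
      have h2 : deriv (fun t => -(deriv y t)) = fun t => -(deriv (deriv y) t) :=
        funext fun t => deriv.neg
      rw [h1, h2]
      simpa using hacc t ht
    · intro t ht hc
      have hc' : -y t = x_H := hc
      exact hney t ht (by linarith)
  · -- zero velocity: stay put
    refine ⟨0, fun _ => x_R, le_refl 0, differentiable_const _, ?_, rfl, ?_, ?_, ?_, ?_⟩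
    · simp
    · simp [hv]
    · simp
    · intro t _; simp [ha.le]
    · intro t _; exact hne.symm
  · -- positive velocity
    have hsafe : x_H < x_R ∨ x_R + v_R ^ 2 / (2 * a_max) < x_H := by
      rcases lt_or_gt_of_ne hne with h | h
      · left; exact h
      · right
        have hprod : 0 < v_R * (x_H - x_R) := by nlinarith
        rw [Real.sign_of_pos hprod] at hstop
        rw [abs_of_pos (by linarith : 0 < x_H - x_R)] at hstop
        linarith
    exact braking_aux x_R x_H v_R a_max ha hv hsafe
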